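/- Let w : Fin n → Bool be a finite word and k, l natural numbers. There exists an infinite sequence x : ℕ → Bool extending w (i.e., x m = w m for all m < n) on which the window counting constraint CC_max(k,l) holds, if and only if CC_max(k,l) holds on the particular extension of w that is constantly false from position n onward. -/
import Mathlib


/-- The window counting constraint CC_max(k,l): every window of `l`
consecutive moves contains at most `k` moves satisfying the formula. -/
def CCmax (k l : ℕ) (x : ℕ → Bool) : Prop :=
  ∀ i : ℕ, ((Finset.Ico i (i + l)).filter (fun m => x m = true)).card ≤ k

theorem ccmax_prefix_extension_iff_all_false (n : ℕ) (w : Fin n → Bool)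
    (k l : ℕ) :
    (∃ x : ℕ → Bool, (∀ m : ℕ, (h : m < n) → x m = w ⟨m, h⟩) ∧ CCmax k l x) ↔
      CCmax k l (fun m => if h : m < n then w ⟨m, h⟩ else false) := by
  constructor
  · rintro ⟨x, hx, hcc⟩ i
    refine le_trans (Finset.card_le_card ?_) (hcc i)
    intro m hm
    simp only [Finset.mem_filter] at hm ⊢
    refine ⟨hm.1, ?_⟩
    rcases hm with ⟨-, hm2⟩
    by_cases h : m < n
    · rw [hx m h]; simpa [h] using hm2
    · simp [h] at hm2
  · intro h
    exact ⟨_, fun m hm => by simp [hm], h⟩
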